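/- There is an absolute constant C > 0 such that for every even integer n ≥ 2 and every integer m with 0 ≤ m ≤ n^{1/2}, one has |α(n,m) − 1| ≤ C·m²/n². -/

import Mathlib

open scoped Classical

/-- Number of pairs `(ξ, ξ')` of Boolean vectors such that `ξ₁+⋯+ξ_n = 0` and
`ξ₁+⋯+ξ_m+ξ'_{m+1}+⋯+ξ'_n = 0`, where `true ↦ +1` and `false ↦ −1`. -/
def countBoth (n m : ℕ) : ℕ :=
  (Finset.univ.filter fun ξ : (Fin n → Bool) × (Fin n → Bool) =>
    (∑ i : Fin n, (if ξ.1 i then (1 : ℤ) else -1)) = 0 ∧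
    (∑ i : Fin n, (if (i : ℕ) < m then (if ξ.1 i then (1 : ℤ) else -1)
           else (if ξ.2 i then (1 : ℤ) else -1))) = 0).card

/-- Number of Boolean vectors `ξ` with `ξ₁+⋯+ξ_n = 0`, where `true ↦ +1`, `false ↦ −1`. -/
def countZero (n : ℕ) : ℕ :=
  (Finset.univ.filter fun ξ : Fin n → Bool =>
    (∑ i : Fin n, (if ξ i then (1 : ℤ) else -1)) = 0).card

/-- `α(n,m) = P[ξ₁+⋯+ξ_n = 0 ∧ ξ₁+⋯+ξ_m+ξ'_{m+1}+⋯+ξ'_n = 0] / P[ξ₁+⋯+ξ_n = 0]²`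
for i.i.d. Rademacher random variables `ξᵢ, ξ'ᵢ`. -/
noncomputable def alphaCorr (n m : ℕ) : ℝ :=
  ((countBoth n m : ℝ) / 2 ^ (2 * n)) / ((countZero n : ℝ) / 2 ^ n) ^ 2

open Finset

lemma sum_pm {n : ℕ} (ξ : Fin n → Bool) (s : Finset (Fin n)) :
    ∑ i ∈ s, (if ξ i then (1:ℤ) else -1)
      = 2 * ((s.filter fun i => ξ i).card : ℤ) - s.card := by
  have h : ∀ i, (if ξ i then (1:ℤ) else -1) = 2 * (if ξ i then (1:ℤ) else 0) - 1 := by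
    intro i; by_cases h : ξ i <;> simp [h]
  rw [Finset.sum_congr rfl (fun i _ => h i)]
  rw [Finset.sum_sub_distrib, ← Finset.mul_sum, Finset.sum_boole, Finset.sum_const]
  simp [mul_comm]

-- cardinality of the head index set
lemma card_head {n m : ℕ} (hm : m ≤ n) :
    ((Finset.univ : Finset (Fin n)).filter fun i : Fin n => (i:ℕ) < m).card = m := by
  have : ((Finset.univ : Finset (Fin n)).filter fun i : Fin n => (i:ℕ) < m)
      = Finset.map (Fin.castLEEmb hm) Finset.univ := by
    ext i
    simp only [Finset.mem_filter, Finset.mem_univ, true_and, Finset.mem_map]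
    constructor
    · intro h; exact ⟨⟨i, h⟩, by simp [Fin.castLEEmb, Fin.castLE]⟩
    · rintro ⟨j, -, rfl⟩; simpa using j.2
  rw [this, Finset.card_map]; simp

lemma card_tail {n m : ℕ} (hm : m ≤ n) :
    ((Finset.univ : Finset (Fin n)).filter fun i : Fin n => ¬ (i:ℕ) < m).card = n - m := by
  have h := Finset.card_filter_add_card_filter_not
    (s := (Finset.univ : Finset (Fin n))) (p := fun i : Fin n => (i:ℕ) < m)
  rw [card_head hm] at h
  simp only [Finset.card_univ, Fintype.card_fin] at h
  omega

lemma count_split {n m : ℕ} (P Q : Finset (Fin n) → Prop) :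
    ((Finset.univ : Finset (Fin n → Bool)).filter fun ξ =>
        P (Finset.univ.filter fun i : Fin n => (i:ℕ) < m ∧ ξ i) ∧
        Q (Finset.univ.filter fun i : Fin n => ¬ (i:ℕ) < m ∧ ξ i)).card
    = (((Finset.univ.filter fun i : Fin n => (i:ℕ) < m).powerset.filter P).card)
      * (((Finset.univ.filter fun i : Fin n => ¬ (i:ℕ) < m).powerset.filter Q).card) := by
  classical
  rw [← Finset.card_product]
  apply Finset.card_bij'
    (i := fun ξ _ => (Finset.univ.filter fun i : Fin n => (i:ℕ) < m ∧ ξ i,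
                      Finset.univ.filter fun i : Fin n => ¬ (i:ℕ) < m ∧ ξ i))
    (j := fun p _ => fun i => decide (i ∈ p.1 ∪ p.2))
  · intro ξ hξ
    simp only [Finset.mem_filter, Finset.mem_univ, true_and] at hξ
    simp only [Finset.mem_product, Finset.mem_filter, Finset.mem_powerset]
    refine ⟨⟨?_, hξ.1⟩, ⟨?_, hξ.2⟩⟩
    · intro i hi; simp only [Finset.mem_filter] at hi ⊢; exact ⟨hi.1, hi.2.1⟩
    · intro i hi; simp only [Finset.mem_filter] at hi ⊢; exact ⟨hi.1, hi.2.1⟩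
  · intro p hp
    simp only [Finset.mem_product, Finset.mem_filter, Finset.mem_powerset] at hp
    obtain ⟨⟨hs, hPs⟩, ⟨hu, hQu⟩⟩ := hp
    simp only [Finset.mem_filter, Finset.mem_univ, true_and]
    have hs' : ∀ i, i ∈ p.1 → (i:ℕ) < m := by
      intro i hi; have := hs hi; simp only [Finset.mem_filter] at this; exact this.2
    have hu' : ∀ i, i ∈ p.2 → ¬ (i:ℕ) < m := by
      intro i hi; have := hu hi; simp only [Finset.mem_filter] at this; exact this.2
    have e1 : (Finset.univ.filter fun i : Fin n =>
        (i:ℕ) < m ∧ decide (i ∈ p.1 ∪ p.2) = true) = p.1 := by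
      ext i
      simp only [Finset.mem_filter, Finset.mem_univ, true_and, decide_eq_true_eq,
        Finset.mem_union]
      constructor
      · rintro ⟨h1, h2 | h2⟩
        · exact h2
        · exact absurd h1 (hu' i h2)
      · intro h; exact ⟨hs' i h, Or.inl h⟩
    have e2 : (Finset.univ.filter fun i : Fin n =>
        ¬ (i:ℕ) < m ∧ decide (i ∈ p.1 ∪ p.2) = true) = p.2 := by
      ext i
      simp only [Finset.mem_filter, Finset.mem_univ, true_and, decide_eq_true_eq,
        Finset.mem_union]
      constructor
      · rintro ⟨h1, h2 | h2⟩
        · exact absurd (hs' i h2) h1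
        · exact h2
      · intro h; exact ⟨hu' i h, Or.inr h⟩
    rw [e1, e2]
    exact ⟨hPs, hQu⟩
  · intro ξ hξ
    funext i
    by_cases h : ξ i = true
    · simp [Finset.mem_union, h]
      by_cases h2 : (i:ℕ) < m <;> simp [h2] <;> omega
    · simp only [Bool.not_eq_true] at h
      simp [Finset.mem_union, h]
  · intro p hp
    simp only [Finset.mem_product, Finset.mem_filter, Finset.mem_powerset] at hp
    obtain ⟨⟨hs, hPs⟩, ⟨hu, hQu⟩⟩ := hp
    have hs' : ∀ i, i ∈ p.1 → (i:ℕ) < m := by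
      intro i hi; have := hs hi; simp only [Finset.mem_filter] at this; exact this.2
    have hu' : ∀ i, i ∈ p.2 → ¬ (i:ℕ) < m := by
      intro i hi; have := hu hi; simp only [Finset.mem_filter] at this; exact this.2
    ext1
    · ext i
      simp only [Finset.mem_filter, Finset.mem_univ, true_and, decide_eq_true_eq,
        Finset.mem_union]
      constructor
      · rintro ⟨h1, h2 | h2⟩
        · exact h2
        · exact absurd h1 (hu' i h2)
      · intro h; exact ⟨hs' i h, Or.inl h⟩
    · ext i
      simp only [Finset.mem_filter, Finset.mem_univ, true_and, decide_eq_true_eq,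
        Finset.mem_union]
      constructor
      · rintro ⟨h1, h2 | h2⟩
        · exact absurd (hs' i h2) h1
        · exact h2
      · intro h; exact ⟨hu' i h, Or.inr h⟩

-- abbreviations
noncomputable def Acard {n : ℕ} (m : ℕ) (ξ : Fin n → Bool) : ℕ :=
  (Finset.univ.filter fun i : Fin n => (i:ℕ) < m ∧ ξ i).card
noncomputable def Bcard {n : ℕ} (m : ℕ) (ξ : Fin n → Bool) : ℕ :=
  (Finset.univ.filter fun i : Fin n => ¬ (i:ℕ) < m ∧ ξ i).card

lemma Acard_add_Bcard {n m : ℕ} (ξ : Fin n → Bool) :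
    (Finset.univ.filter fun i : Fin n => ξ i).card = Acard m ξ + Bcard m ξ := by
  have h := Finset.card_filter_add_card_filter_not
    (s := (Finset.univ.filter fun i : Fin n => ξ i)) (p := fun i : Fin n => (i:ℕ) < m)
  rw [Finset.filter_filter, Finset.filter_filter] at h
  unfold Acard Bcard
  rw [← h]
  congr 1
  · congr 1; ext i; simp only [Finset.mem_filter, Finset.mem_univ, true_and]; tauto
  · congr 1; ext i; simp only [Finset.mem_filter, Finset.mem_univ, true_and]; tauto

lemma Acard_le {n m : ℕ} (hm : m ≤ n) (ξ : Fin n → Bool) : Acard m ξ ≤ m := by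
  calc Acard m ξ ≤ ((Finset.univ : Finset (Fin n)).filter fun i : Fin n => (i:ℕ) < m).card := by
        apply Finset.card_le_card
        intro i hi
        simp only [Finset.mem_filter, Finset.mem_univ, true_and] at hi ⊢
        exact hi.1
    _ = m := card_head hm

lemma cond1_iff {n m : ℕ} (hn : Even n) (ξ : Fin n → Bool) :
    (∑ i : Fin n, (if ξ i then (1 : ℤ) else -1)) = 0 ↔ Acard m ξ + Bcard m ξ = n/2 := by
  rw [sum_pm, ← Acard_add_Bcard (m := m)]
  obtain ⟨c, hc⟩ := hn
  simp only [Finset.card_univ, Fintype.card_fin]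
  omega

lemma cond2_iff {n m : ℕ} (hn : Even n) (hm : m ≤ n) (ξ₁ ξ₂ : Fin n → Bool) :
    (∑ i : Fin n, (if (i : ℕ) < m then (if ξ₁ i then (1 : ℤ) else -1)
           else (if ξ₂ i then (1 : ℤ) else -1))) = 0 ↔ Acard m ξ₁ + Bcard m ξ₂ = n/2 := by
  rw [Finset.sum_ite]
  rw [sum_pm ξ₁, sum_pm ξ₂]
  rw [Finset.filter_filter, Finset.filter_filter]
  rw [card_head hm, card_tail hm]
  unfold Acard Bcard
  obtain ⟨c, hc⟩ := hn
  have h1 : ((Finset.univ.filter fun i : Fin n => (i:ℕ) < m ∧ ξ₁ i)).card ≤ m := by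
    have := Acard_le hm ξ₁; exact this
  have h2 : ((Finset.univ.filter fun i : Fin n => ¬ (i:ℕ) < m ∧ ξ₂ i)).card ≤ n - m := by
    calc _ ≤ ((Finset.univ : Finset (Fin n)).filter fun i : Fin n => ¬ (i:ℕ) < m).card := by
          apply Finset.card_le_card
          intro i hi
          simp only [Finset.mem_filter, Finset.mem_univ, true_and] at hi ⊢
          exact hi.1
      _ = n - m := card_tail hm
  constructor
  · intro h; omega
  · intro h; omega

lemma card_filter_inst {α : Type*} (s : Finset α) (p : α → Prop) (i1 i2 : DecidablePred p) :
    (@Finset.filter α p i1 s).card = (@Finset.filter α p i2 s).card := by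
  have h : i1 = i2 := Subsingleton.elim _ _
  rw [h]

lemma card_filter_iff {α : Type*} [Fintype α] (p q : α → Prop) [DecidablePred p]
    [DecidablePred q] (h : ∀ a, p a ↔ q a) :
    (Finset.univ.filter p).card = (Finset.univ.filter q).card := by
  rw [Finset.filter_congr (fun x _ => h x)]

lemma powerset_filter_card_head {n m k : ℕ} (hm : m ≤ n) :
    (((Finset.univ.filter fun i : Fin n => (i:ℕ) < m).powerset.filter
        fun s => s.card = k).card) = m.choose k := by
  rw [← Finset.powersetCard_eq_filter, Finset.card_powersetCard, card_head hm]

lemma powerset_filter_card_tail {n m j : ℕ} (hm : m ≤ n) :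
    (((Finset.univ.filter fun i : Fin n => ¬ (i:ℕ) < m).powerset.filter
        fun s => s.card = j).card) = (n - m).choose j := by
  rw [← Finset.powersetCard_eq_filter, Finset.card_powersetCard, card_tail hm]

lemma powerset_filter_true_head {n m : ℕ} (hm : m ≤ n) :
    (((Finset.univ.filter fun i : Fin n => (i:ℕ) < m).powerset.filter
        fun _ => True).card) = 2 ^ m := by
  rw [Finset.filter_true, Finset.card_powerset, card_head hm]

lemma countZero_eq {n : ℕ} (hn : Even n) : countZero n = n.choose (n/2) := by
  unfold countZero
  have h1 : ∀ ξ : Fin n → Bool, ((∑ i : Fin n, (if ξ i then (1 : ℤ) else -1)) = 0)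
      ↔ ((Finset.univ.filter fun i : Fin n => (i:ℕ) < n ∧ ξ i).card = n/2 ∧
          (True : Prop)) := by
    intro ξ
    rw [cond1_iff (m := n) hn]
    have hB : Bcard n ξ = 0 := by
      unfold Bcard
      rw [Finset.card_eq_zero]
      ext i; simp only [Finset.mem_filter, Finset.mem_univ, true_and, Finset.notMem_empty,
        iff_false]
      intro h; exact h.1 i.2
    unfold Acard at *
    rw [hB]
    simp
  rw [Finset.filter_congr (fun x _ => h1 x)]
  have hsplit := count_split (n := n) (m := n) (P := fun s => s.card = n/2)
    (Q := fun _ => True)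
  have h2 : ((Finset.univ.filter fun i : Fin n => ¬ (i:ℕ) < n).powerset.filter
      fun _ => (True : Prop)).card = 1 := by
    rw [Finset.filter_true, Finset.card_powerset, card_tail le_rfl]
    simp
  refine ((card_filter_inst _ _ _ _).trans hsplit).trans ?_
  refine (congrArg₂ (· * ·)
    ((card_filter_inst _ _ _ _).trans (powerset_filter_card_head (n := n) (k := n/2) le_rfl))
    ((card_filter_inst _ _ _ _).trans h2)).trans (mul_one _)

lemma countBoth_eq {n m : ℕ} (hn : Even n) (hm : m ≤ n/2) :
    countBoth n m = ∑ k ∈ Finset.range (m+1),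
      (m.choose k * (n-m).choose (n/2 - k)) * (2^m * (n-m).choose (n/2 - k)) := by
  have hmn : m ≤ n := le_trans hm (Nat.div_le_self n 2)
  unfold countBoth
  have h1 : ∀ p : (Fin n → Bool) × (Fin n → Bool), p ∈ (Finset.univ : Finset _) →
      (((∑ i : Fin n, (if p.1 i then (1 : ℤ) else -1)) = 0 ∧
        (∑ i : Fin n, (if (i : ℕ) < m then (if p.1 i then (1 : ℤ) else -1)
           else (if p.2 i then (1 : ℤ) else -1))) = 0)
      ↔ (Acard m p.1 + Bcard m p.1 = n/2 ∧ Acard m p.1 + Bcard m p.2 = n/2)) := by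
    intro p _
    exact and_congr (cond1_iff hn _) (cond2_iff hn hmn _ _)
  rw [Finset.filter_congr h1]
  rw [Finset.card_eq_sum_card_fiberwise (f := fun p => Acard m p.1)
    (t := Finset.range (m+1)) (fun p hp => by
      simp only [Finset.mem_coe, Finset.mem_range]
      exact Nat.lt_succ_of_le (Acard_le hmn p.1))]
  apply Finset.sum_congr rfl
  intro k hk
  simp only [Finset.mem_range] at hk
  have hkm : k ≤ m := Nat.lt_succ_iff.mp hk
  have hkc : k ≤ n/2 := le_trans hkm hm
  rw [Finset.filter_filter]
  have h2 : ∀ p : (Fin n → Bool) × (Fin n → Bool), p ∈ (Finset.univ : Finset _) →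
      (((Acard m p.1 + Bcard m p.1 = n/2 ∧ Acard m p.1 + Bcard m p.2 = n/2) ∧
        Acard m p.1 = k)
      ↔ ((Acard m p.1 = k ∧ Bcard m p.1 = n/2 - k) ∧
         (True ∧ Bcard m p.2 = n/2 - k))) := by
    intro p _
    constructor
    · rintro ⟨⟨ha, hb⟩, hc⟩
      refine ⟨⟨hc, by omega⟩, trivial, by omega⟩
    · rintro ⟨⟨ha, hb⟩, -, hc⟩
      exact ⟨⟨by omega, by omega⟩, ha⟩
  rw [Finset.filter_congr h2]
  rw [← Finset.univ_product_univ,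
    Finset.filter_product (p := fun ξ : Fin n → Bool => Acard m ξ = k ∧ Bcard m ξ = n/2 - k)
      (q := fun ξ : Fin n → Bool => True ∧ Bcard m ξ = n/2 - k),
    Finset.card_product]
  unfold Acard Bcard
  have hc1 := count_split (n := n) (m := m) (P := fun s => s.card = k)
    (Q := fun u => u.card = n/2 - k)
  have hc2 := count_split (n := n) (m := m) (P := fun _ => True)
    (Q := fun u => u.card = n/2 - k)
  have f3 : ((Finset.univ.filter fun i : Fin n => (i:ℕ) < m).powerset.filter
      fun _ => (True : Prop)).card = 2 ^ m := by
    rw [Finset.filter_true, Finset.card_powerset, card_head hmn]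
  refine (congrArg₂ (· * ·) ((card_filter_inst _ _ _ _).trans hc1)
    ((card_filter_inst _ _ _ _).trans hc2)).trans ?_
  exact congrArg₂ (· * ·)
    (congrArg₂ (· * ·)
      ((card_filter_inst _ _ _ _).trans (powerset_filter_card_head (n := n) (k := k) hmn))
      ((card_filter_inst _ _ _ _).trans (powerset_filter_card_tail (n := n) (j := n/2 - k) hmn)))
    (congrArg₂ (· * ·)
      ((card_filter_inst _ _ _ _).trans f3)
      ((card_filter_inst _ _ _ _).trans (powerset_filter_card_tail (n := n) (j := n/2 - k) hmn)))

lemma vandermonde_range {n m c : ℕ} (hm : m ≤ c) :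
    ∑ k ∈ Finset.range (m+1), m.choose k * (n-m).choose (c-k) = (m + (n-m)).choose c := by
  rw [Nat.add_choose_eq, Finset.Nat.sum_antidiagonal_eq_sum_range_succ_mk]
  apply Finset.sum_subset
  · apply Finset.range_subset_range.2; omega
  · intro k hk hk2
    simp only [Finset.mem_range] at hk hk2
    have : m < k := by omega
    simp [Nat.choose_eq_zero_of_lt this]

lemma binom_rec (m : ℕ) (f : ℕ → ℤ) :
    ∑ k ∈ Finset.range (m+1+1), ((m+1).choose k : ℤ) * f k
    = ∑ k ∈ Finset.range (m+1), (m.choose k : ℤ) * (f k + f (k+1)) := by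
  have h1 : ∀ k, ((m+1).choose (k+1) : ℤ) = m.choose k + m.choose (k+1) := by
    intro k; rw [Nat.choose_succ_succ]; push_cast; ring
  have e1 := Finset.sum_range_succ' (fun k => ((m+1).choose k : ℤ) * f k) (m+1)
  have e2 : ∑ k ∈ Finset.range (m+1), ((m+1).choose (k+1) : ℤ) * f (k+1)
      = ∑ k ∈ Finset.range (m+1), ((m.choose k : ℤ) * f (k+1)
          + (m.choose (k+1) : ℤ) * f (k+1)) :=
    Finset.sum_congr rfl (fun k _ => by rw [h1 k]; ring)
  rw [Finset.sum_add_distrib] at e2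
  have e4 := Finset.sum_range_succ' (fun k => ((m).choose k : ℤ) * f k) (m+1)
  have e5 := Finset.sum_range_succ (fun k => ((m).choose k : ℤ) * f k) (m+1)
  have e6 : ((m.choose (m+1) : ℤ)) = 0 := by
    rw [Nat.choose_succ_self]; simp
  have e7 : ∑ k ∈ Finset.range (m+1), (m.choose k : ℤ) * (f k + f (k+1))
      = (∑ k ∈ Finset.range (m+1), (m.choose k : ℤ) * f k)
        + ∑ k ∈ Finset.range (m+1), (m.choose k : ℤ) * f (k+1) := by
    rw [← Finset.sum_add_distrib]
    exact Finset.sum_congr rfl (fun k _ => mul_add _ _ _)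
  simp only [Nat.choose_zero_right, Nat.cast_one, one_mul] at e1 e4
  rw [e6] at e5
  linarith [e1, e2, e4, e5, e7]

lemma sum_choose_int (m : ℕ) :
    ∑ k ∈ Finset.range (m+1), (m.choose k : ℤ) = 2^m := by
  have := Nat.sum_range_choose m
  exact_mod_cast congrArg (Nat.cast : ℕ → ℤ) this

lemma moment2 (m : ℕ) :
    ∑ k ∈ Finset.range (m+1), (m.choose k : ℤ) * (2*(k:ℤ) - (m:ℤ))^2
      = (m:ℤ) * 2^m := by
  induction m with
  | zero => norm_num
  | succ m ih =>
    have h := binom_rec m (fun k => (2*(k:ℤ) - ((m:ℤ)+1))^2)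
    push_cast
    push_cast at h
    rw [h]
    have hc : ∀ k ∈ Finset.range (m+1), (m.choose k : ℤ) *
        ((2*(k:ℤ) - ((m:ℤ)+1))^2 + (2*((k:ℤ)+1) - ((m:ℤ)+1))^2)
        = 2 * ((m.choose k : ℤ) * (2*(k:ℤ) - (m:ℤ))^2) + 2 * (m.choose k : ℤ) := by
      intro k _; ring
    rw [Finset.sum_congr rfl hc, Finset.sum_add_distrib, ← Finset.mul_sum, ← Finset.mul_sum,
      ih, sum_choose_int]
    ring

lemma moment4 (m : ℕ) :
    ∑ k ∈ Finset.range (m+1), (m.choose k : ℤ) * (2*(k:ℤ) - (m:ℤ))^4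
      ≤ 3 * (m:ℤ)^2 * 2^m := by
  induction m with
  | zero => norm_num
  | succ m ih =>
    have h := binom_rec m (fun k => (2*(k:ℤ) - ((m:ℤ)+1))^4)
    push_cast
    push_cast at h
    rw [h]
    have hc : ∀ k ∈ Finset.range (m+1), (m.choose k : ℤ) *
        ((2*(k:ℤ) - ((m:ℤ)+1))^4 + (2*((k:ℤ)+1) - ((m:ℤ)+1))^4)
        = 2 * ((m.choose k : ℤ) * (2*(k:ℤ) - (m:ℤ))^4)
          + 12 * ((m.choose k : ℤ) * (2*(k:ℤ) - (m:ℤ))^2) + 2 * (m.choose k : ℤ) := by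
      intro k _; ring
    rw [Finset.sum_congr rfl hc, Finset.sum_add_distrib, Finset.sum_add_distrib,
      ← Finset.mul_sum, ← Finset.mul_sum, ← Finset.mul_sum, moment2, sum_choose_int]
    have h2 : (0:ℤ) < 2^m := by positivity
    rw [pow_succ 2 m]
    nlinarith [ih, mul_nonneg (Int.natCast_nonneg m) h2.le]

noncomputable def facreal (c k : ℕ) (i : ℕ) : ℝ :=
  if i < 2*k then (if i % 2 = 1 then 2*(c:ℝ) - i + 1 else 2*(c:ℝ) - i)
  else 2*(c:ℝ) + 2*(k:ℝ) - 2*i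

lemma choose_shift (a r : ℕ) :
    ((a+1 - r) * (a+1).choose r : ℕ) = (a+1) * a.choose r := by
  rcases Nat.lt_or_ge (a+1) r with h | h
  · rw [Nat.choose_eq_zero_of_lt h, Nat.choose_eq_zero_of_lt (by omega)]
    simp
  · calc (a+1 - r) * (a+1).choose r = (a+1).choose r * (a+1 - r) := mul_comm _ _
      _ = (a+1).choose (r+1) * (r+1) := (Nat.choose_succ_right_eq (a+1) r).symm
      _ = (a+1) * a.choose r := (Nat.add_one_mul_choose_eq a r).symm

lemma star0 (c : ℕ) : ∀ k, k ≤ c →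
    (2:ℝ)^(2*k) * ((2*c - 2*k).choose (c - k) : ℝ) * ∏ i ∈ Finset.range (2*k), (2*(c:ℝ) - i)
    = ((2*c).choose c : ℝ) * ∏ i ∈ Finset.range (2*k), facreal c k i := by
  intro k
  induction k with
  | zero => simp
  | succ k ih =>
    intro hk1
    have hk : k ≤ c := by omega
    have ihk := ih hk
    -- index rewrites
    have h2k : 2*(k+1) = 2*k+1+1 := by ring
    rw [h2k, Finset.prod_range_succ, Finset.prod_range_succ,
      Finset.prod_range_succ, Finset.prod_range_succ]
    -- the products over range (2*k) with facreal c (k+1) agree with facreal c k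
    have hprod : ∏ i ∈ Finset.range (2*k), facreal c (k+1) i
        = ∏ i ∈ Finset.range (2*k), facreal c k i := by
      apply Finset.prod_congr rfl
      intro i hi
      simp only [Finset.mem_range] at hi
      unfold facreal
      have h1 : i < 2*(k+1) := by omega
      have h2 : i < 2*k := hi
      rw [if_pos h1, if_pos h2]
    rw [hprod]
    -- evaluate the two new facreal factors
    have hf1 : facreal c (k+1) (2*k) = 2*(c:ℝ) - 2*k := by
      unfold facreal
      rw [if_pos (by omega : 2*k < 2*(k+1))]
      have : (2*k) % 2 = 0 := by omega
      rw [this]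
      norm_num
    have hf2 : facreal c (k+1) (2*k+1) = 2*(c:ℝ) - (2*k+1) + 1 := by
      unfold facreal
      rw [if_pos (by omega : 2*k+1 < 2*(k+1))]
      have : (2*k+1) % 2 = 1 := by omega
      rw [this]
      norm_num
    rw [hf1, hf2]
    -- central binomial identity
    have hI0 := Nat.succ_mul_centralBinom_succ (c - (k+1))
    have e1 : c - (k+1) + 1 = c - k := by omega
    rw [e1] at hI0
    unfold Nat.centralBinom at hI0
    have e2 : 2*(c-k) = 2*c - 2*k := by omega
    have e3 : 2*(c-(k+1)) = 2*c - 2*(k+1) := by omega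
    rw [e2, e3] at hI0
    -- cast to ℝ
    have hIreal : ((c:ℝ) - k) * ((2*c - 2*k).choose (c-k) : ℝ)
        = 2 * (2*(c:ℝ) - 2*k - 1) * ((2*c - 2*(k+1)).choose (c-(k+1)) : ℝ) := by
      have := congrArg (Nat.cast : ℕ → ℝ) hI0
      push_cast [Nat.cast_sub hk, Nat.cast_sub hk1,
        Nat.cast_sub (show 2*(k+1) ≤ 2*c by omega),
        Nat.cast_sub (show 2*k ≤ 2*c by omega)] at this
      push_cast
      linarith [this]
    have e6 : 2*c - (2*k+1+1) = 2*c - 2*(k+1) := by omega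
    rw [e6]
    push_cast
    linear_combination
      (-(2:ℝ) * 2^(2*k) * (∏ i ∈ Finset.range (2*k), (2*(c:ℝ) - i)) * (2*(c:ℝ) - 2*k)) * hIreal
      + (2 * (2*(c:ℝ) - 2*k) * ((c:ℝ) - k)) * ihk

lemma star (c k m : ℕ) (hkm : 2*k ≤ m) (hmc : m ≤ c) :
    (2:ℝ)^m * ((2*c - m).choose (c - k) : ℝ) * ∏ i ∈ Finset.range m, (2*(c:ℝ) - i)
    = ((2*c).choose c : ℝ) * ∏ i ∈ Finset.range m, facreal c k i := by
  induction m, hkm using Nat.le_induction with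
  | base => exact star0 c k (by omega)
  | succ m hm ih =>
    have hmc' : m ≤ c := by omega
    have ihm := ih hmc'
    rw [Finset.prod_range_succ, Finset.prod_range_succ]
    have hfm : facreal c k m = 2*(c:ℝ) + 2*(k:ℝ) - 2*m := by
      unfold facreal
      rw [if_neg (by omega)]
    rw [hfm]
    -- choose shift identity, a+1 = 2*c - m
    have ha : 2*c - m = (2*c - m - 1) + 1 := by omega
    have hJ0 := choose_shift (2*c - m - 1) (c - k)
    rw [← ha] at hJ0
    have e4 : 2*c - m - (c - k) = c + k - m := by omega
    rw [e4] at hJ0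
    have e5 : 2*c - m - 1 = 2*c - (m+1) := by omega
    rw [e5] at hJ0
    have hJreal : ((c:ℝ) + k - m) * ((2*c - m).choose (c-k) : ℝ)
        = (2*(c:ℝ) - m) * ((2*c - (m+1)).choose (c-k) : ℝ) := by
      have := congrArg (Nat.cast : ℕ → ℝ) hJ0
      push_cast [Nat.cast_sub (show m ≤ c + k by omega),
        Nat.cast_sub (show m ≤ 2*c by omega)] at this
      linarith [this]
    push_cast
    linear_combination
      (-(2:ℝ) * 2^m * (∏ i ∈ Finset.range m, (2*(c:ℝ) - i))) * hJreal
      + (2 * ((c:ℝ) + k - m)) * ihm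

lemma one_sub_sum_le_prod {ι : Type*} (s : Finset ι) (f : ι → ℝ)
    (h0 : ∀ i ∈ s, 0 ≤ f i) (h1 : ∀ i ∈ s, f i ≤ 1) :
    1 - ∑ i ∈ s, f i ≤ ∏ i ∈ s, (1 - f i) := by
  classical
  induction s using Finset.cons_induction with
  | empty => simp
  | cons a s ha ih =>
    rw [Finset.prod_cons, Finset.sum_cons]
    have h0a : 0 ≤ f a := h0 a (Finset.mem_cons_self a s)
    have h1a : f a ≤ 1 := h1 a (Finset.mem_cons_self a s)
    have h0s : ∀ i ∈ s, 0 ≤ f i := fun i hi => h0 i (Finset.mem_cons.2 (Or.inr hi))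
    have h1s : ∀ i ∈ s, f i ≤ 1 := fun i hi => h1 i (Finset.mem_cons.2 (Or.inr hi))
    have ihs := ih h0s h1s
    have hsum : 0 ≤ ∑ i ∈ s, f i := Finset.sum_nonneg h0s
    have hprod : 0 ≤ ∏ i ∈ s, (1 - f i) :=
      Finset.prod_nonneg (fun i hi => by linarith [h0s i hi, h1s i hi])
    nlinarith [mul_le_mul_of_nonneg_left ihs (by linarith : (0:ℝ) ≤ 1 - f a)]

lemma prod_le_exp_sum {ι : Type*} (s : Finset ι) (f : ι → ℝ)
    (h0 : ∀ i ∈ s, 0 ≤ f i) :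
    ∏ i ∈ s, (1 + f i) ≤ Real.exp (∑ i ∈ s, f i) := by
  rw [Real.exp_sum]
  apply Finset.prod_le_prod
  · intro i hi; linarith [h0 i hi]
  · intro i hi
    have := Real.add_one_le_exp (f i)
    linarith

lemma sum_g_le (k : ℕ) : ∀ m, 2*k ≤ m →
    ∑ i ∈ Finset.range m, (if i < 2*k then (1:ℝ) else (i:ℝ) - 2*k)
      ≤ (m:ℝ) + ((m:ℝ) - 2*k)^2 := by
  intro m hm
  induction m, hm using Nat.le_induction with
  | base =>
    have : ∀ i ∈ Finset.range (2*k), (if i < 2*k then (1:ℝ) else (i:ℝ) - 2*k) = 1 := by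
      intro i hi; rw [if_pos (Finset.mem_range.1 hi)]
    rw [Finset.sum_congr rfl this, Finset.sum_const, Finset.card_range, nsmul_eq_mul]
    push_cast
    nlinarith [sq_nonneg ((2:ℝ)*(k:ℝ) - 2*(k:ℝ))]
  | succ m hm ih =>
    rw [Finset.sum_range_succ, if_neg (by omega : ¬ m < 2*k)]
    have hm' : (2:ℝ)*k ≤ m := by exact_mod_cast Nat.cast_le.2 hm
    push_cast
    nlinarith [ih]

lemma exp_three_lt : Real.exp 3 < 21 := by
  have h1 : Real.exp 1 < 2.7182818286 := Real.exp_one_lt_d9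
  have h3 : Real.exp 3 = (Real.exp 1)^3 := by
    rw [← Real.exp_nat_mul]; norm_num
  rw [h3]
  have h0 : (0:ℝ) ≤ Real.exp 1 := (Real.exp_pos 1).le
  calc (Real.exp 1)^3 < 2.7182818286^3 := by
        apply pow_lt_pow_left₀ h1 h0; norm_num
    _ < 21 := by norm_num

lemma t_bound_half (c m k : ℕ) (hc : 1 ≤ c) (hmc : m ≤ c) (hm2 : m*m ≤ 2*c)
    (hk2 : 2*k ≤ m) :
    |2^m * ((2*c - m).choose (c - k) : ℝ) / ((2*c).choose c : ℝ) - 1|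
      ≤ 21 * ((m:ℝ) + ((m:ℝ) - 2*k)^2) / c := by
  have hc' : (1:ℝ) ≤ c := by exact_mod_cast hc
  have hN : (0:ℝ) < ((2*c).choose c : ℝ) := by
    exact_mod_cast Nat.choose_pos (by omega : c ≤ 2*c)
  have hdpos : ∀ i ∈ Finset.range m, (0:ℝ) < 2*(c:ℝ) - i := by
    intro i hi
    simp only [Finset.mem_range] at hi
    have : (i:ℝ) < m := by exact_mod_cast hi
    have : (m:ℝ) ≤ c := by exact_mod_cast hmc
    linarith
  have hdc : ∀ i ∈ Finset.range m, (c:ℝ) ≤ 2*(c:ℝ) - i := by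
    intro i hi
    simp only [Finset.mem_range] at hi
    have h1 : (i:ℝ) < m := by exact_mod_cast hi
    have h2 : (m:ℝ) ≤ c := by exact_mod_cast hmc
    linarith
  have hDpos : (0:ℝ) < ∏ i ∈ Finset.range m, (2*(c:ℝ) - i) :=
    Finset.prod_pos hdpos
  -- t as a product of ratios
  set t : ℝ := 2^m * ((2*c - m).choose (c - k) : ℝ) / ((2*c).choose c : ℝ) with hts
  have ht : t = ∏ i ∈ Finset.range m, (facreal c k i / (2*(c:ℝ) - i)) := by
    rw [Finset.prod_div_distrib]
    rw [hts, div_eq_div_iff hN.ne' hDpos.ne']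
    have := star c k m hk2 hmc
    linarith [this]
  -- error terms
  set e : ℕ → ℝ := fun i => (if i < 2*k then (1:ℝ) else (i:ℝ) - 2*k) / c with he
  have he0 : ∀ i ∈ Finset.range m, 0 ≤ e i := by
    intro i hi
    simp only [Finset.mem_range] at hi
    rw [he]
    apply div_nonneg _ (by linarith)
    by_cases h : i < 2*k
    · rw [if_pos h]; norm_num
    · rw [if_neg h]
      have : (2:ℝ)*k ≤ i := by exact_mod_cast Nat.cast_le.2 (by omega : 2*k ≤ i)
      linarith
  have he1 : ∀ i ∈ Finset.range m, e i ≤ 1 := by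
    intro i hi
    simp only [Finset.mem_range] at hi
    rw [he]
    rw [div_le_one (by linarith)]
    by_cases h : i < 2*k
    · rw [if_pos h]; linarith
    · rw [if_neg h]
      have h1 : (i:ℝ) < m := by exact_mod_cast hi
      have h2 : (m:ℝ) ≤ c := by exact_mod_cast hmc
      have h3 : (0:ℝ) ≤ 2*k := by positivity
      linarith
  -- pointwise ratio bound
  have hratio : ∀ i ∈ Finset.range m,
      |facreal c k i / (2*(c:ℝ) - i) - 1| ≤ e i := by
    intro i hi
    have hd := hdpos i hi
    have hdc' := hdc i hi
    have hg0 : (0:ℝ) ≤ (if i < 2*k then (1:ℝ) else (i:ℝ) - 2*k) := by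
      by_cases h : i < 2*k
      · rw [if_pos h]; norm_num
      · rw [if_neg h]
        have : (2:ℝ)*k ≤ i := by exact_mod_cast Nat.cast_le.2 (by omega : 2*k ≤ i)
        linarith
    have hdiff : |facreal c k i - (2*(c:ℝ) - i)|
        ≤ (if i < 2*k then (1:ℝ) else (i:ℝ) - 2*k) := by
      unfold facreal
      by_cases h : i < 2*k
      · rw [if_pos h, if_pos h]
        by_cases ho : i % 2 = 1
        · rw [if_pos ho]
          have : 2*(c:ℝ) - i + 1 - (2*(c:ℝ) - i) = 1 := by ring
          rw [this, abs_one]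
        · rw [if_neg ho]
          simp
      · rw [if_neg h, if_neg h]
        have h1 : (2:ℝ)*k ≤ i := by exact_mod_cast Nat.cast_le.2 (by omega : 2*k ≤ i)
        have : 2*(c:ℝ) + 2*(k:ℝ) - 2*i - (2*(c:ℝ) - i) = -((i:ℝ) - 2*k) := by ring
        rw [this, abs_neg, abs_of_nonneg (by linarith)]
    have heq : facreal c k i / (2*(c:ℝ) - i) - 1
        = (facreal c k i - (2*(c:ℝ) - i)) / (2*(c:ℝ) - i) := by
      field_simp
    rw [heq, abs_div, abs_of_pos hd, he]
    exact div_le_div₀ hg0 hdiff (by linarith) hdc'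
  -- sum bound
  set S := ∑ i ∈ Finset.range m, e i with hSdef
  have hcpos : (0:ℝ) < c := by linarith
  have hSg : S = (∑ i ∈ Finset.range m, (if i < 2*k then (1:ℝ) else (i:ℝ) - 2*k)) / c := by
    rw [hSdef, he, Finset.sum_div]
  have hSB : S ≤ ((m:ℝ) + ((m:ℝ) - 2*k)^2) / c := by
    rw [hSg]
    exact (div_le_div_iff_of_pos_right hcpos).mpr (sum_g_le k m hk2)
  have hS0 : 0 ≤ S := Finset.sum_nonneg he0
  have hB0 : 0 ≤ ((m:ℝ) + ((m:ℝ) - 2*k)^2) / c := le_trans hS0 hSB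
  have hS3 : S ≤ 3 := by
    have hm2' : (m:ℝ)*(m:ℝ) ≤ 2*c := by exact_mod_cast hm2
    have hmc' : (m:ℝ) ≤ c := by exact_mod_cast hmc
    have hk0 : (0:ℝ) ≤ 2*(k:ℝ) := by positivity
    have hk2' : 2*(k:ℝ) ≤ m := by exact_mod_cast hk2
    have hD2 : ((m:ℝ) - 2*k)^2 ≤ (m:ℝ)*(m:ℝ) := by nlinarith
    have : ((m:ℝ) + ((m:ℝ) - 2*k)^2) / c ≤ 3 := by
      rw [div_le_iff₀ hcpos]
      nlinarith
    linarith
  -- lower bound on t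
  have hlow : 1 - S ≤ t := by
    rw [ht, hSdef]
    calc 1 - ∑ i ∈ Finset.range m, e i ≤ ∏ i ∈ Finset.range m, (1 - e i) :=
          one_sub_sum_le_prod _ _ he0 he1
      _ ≤ ∏ i ∈ Finset.range m, (facreal c k i / (2*(c:ℝ) - i)) := by
          apply Finset.prod_le_prod
          · intro i hi; linarith [he1 i hi]
          · intro i hi
            have := abs_le.1 (hratio i hi)
            linarith [this.1]
  -- upper bound on t
  have hup : t ≤ Real.exp S := by
    rw [ht, hSdef]
    calc ∏ i ∈ Finset.range m, (facreal c k i / (2*(c:ℝ) - i))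
        ≤ ∏ i ∈ Finset.range m, (1 + e i) := by
          apply Finset.prod_le_prod
          · intro i hi
            have := abs_le.1 (hratio i hi)
            linarith [this.1, he1 i hi]
          · intro i hi
            have := abs_le.1 (hratio i hi)
            linarith [this.2]
      _ ≤ Real.exp (∑ i ∈ Finset.range m, e i) := prod_le_exp_sum _ _ he0
  -- conclude
  have hexp1 : Real.exp S - 1 ≤ S * Real.exp S := by
    have h1 := Real.add_one_le_exp (-S)
    have h2 : Real.exp (-S) * Real.exp S = 1 := by
      rw [← Real.exp_add]; simp
    nlinarith [mul_le_mul_of_nonneg_right h1 (Real.exp_pos S).le, Real.exp_pos S]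
  have hexp2 : Real.exp S ≤ 21 := le_trans (Real.exp_le_exp.2 hS3) exp_three_lt.le
  rw [abs_le]
  constructor
  · have : -S ≤ t - 1 := by linarith
    have h21 : S ≤ 21 * (((m:ℝ) + ((m:ℝ) - 2*k)^2) / c) := by linarith [hSB, hB0]
    have : 21 * (((m:ℝ) + ((m:ℝ) - 2*k)^2) / c) = 21 * ((m:ℝ) + ((m:ℝ) - 2*k)^2) / c := by
      ring
    linarith [this]
  · have ht1 : t - 1 ≤ S * Real.exp S := by linarith
    have hSS : S * Real.exp S ≤ 21 * S := by
      have := mul_le_mul_of_nonneg_left hexp2 hS0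
      linarith [this]
    have h21 : 21 * S ≤ 21 * (((m:ℝ) + ((m:ℝ) - 2*k)^2) / c) := by linarith
    have heq : 21 * (((m:ℝ) + ((m:ℝ) - 2*k)^2) / c) = 21 * ((m:ℝ) + ((m:ℝ) - 2*k)^2) / c := by
      ring
    linarith [heq]

lemma t_bound (c m k : ℕ) (hc : 1 ≤ c) (hmc : m ≤ c) (hm2 : m*m ≤ 2*c) (hk : k ≤ m) :
    |2^m * ((2*c - m).choose (c - k) : ℝ) / ((2*c).choose c : ℝ) - 1|
      ≤ 21 * ((m:ℝ) + ((m:ℝ) - 2*k)^2) / c := by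
  rcases le_or_gt (2*k) m with h | h
  · exact t_bound_half c m k hc hmc hm2 h
  · have hk2' : 2*(m-k) ≤ m := by omega
    have hsym : (2*c - m).choose (c - k) = (2*c - m).choose (c - (m-k)) := by
      have h1 : c - (m-k) = (2*c - m) - (c - k) := by omega
      rw [h1, Nat.choose_symm (by omega : c - k ≤ 2*c - m)]
    rw [hsym]
    have hb := t_bound_half c m (m-k) hc hmc hm2 hk2'
    have hcast : ((m - k : ℕ) : ℝ) = (m:ℝ) - k := by
      exact Nat.cast_sub hk
    rw [hcast] at hb
    have heq : ((m:ℝ) - 2*((m:ℝ) - k))^2 = ((m:ℝ) - 2*(k:ℝ))^2 := by ring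
    rw [heq] at hb
    exact hb

/-- There is `C > 0` such that for every even `n ≥ 2` and `0 ≤ m ≤ n^{1/2}`,
`|α(n,m) − 1| ≤ C m²/n²`. -/
theorem alpha_close_to_one_quadratic :
    ∃ C : ℝ, 0 < C ∧
      ∀ n : ℕ, Even n → 2 ≤ n →
      ∀ m : ℕ, (m : ℝ) ≤ Real.sqrt n →
        |alphaCorr n m - 1| ≤ C * (m : ℝ) ^ 2 / (n : ℝ) ^ 2 := by
  refine ⟨10584, by norm_num, ?_⟩
  intro n hn hn2 m hm
  -- basic numeric setup
  obtain ⟨c, hc⟩ := hn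
  have hn2c : n = 2*c := by omega
  have hc1 : 1 ≤ c := by omega
  have hm2 : m*m ≤ 2*c := by
    have h0 : (0:ℝ) ≤ n := by positivity
    have h1 : (m:ℝ)^2 ≤ n := by
      have := Real.sq_sqrt h0
      nlinarith [hm, Real.sqrt_nonneg (n:ℝ), Nat.cast_nonneg (α := ℝ) m]
    have h2 : m^2 ≤ n := by exact_mod_cast h1
    calc m*m = m^2 := (sq m).symm
      _ ≤ n := h2
      _ = 2*c := hn2c
  have hmc : m ≤ c := by
    rcases le_or_gt m 1 with h | h
    · omega
    · have : 2*m ≤ m*m := Nat.mul_le_mul_right m h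
      omega
  have hndiv : n/2 = c := by omega
  have hnm : n - m = 2*c - m := by omega
  -- the central binomial coefficient
  set N : ℝ := ((2*c).choose c : ℝ) with hNdef
  have hNpos : (0:ℝ) < N := by
    rw [hNdef]; exact_mod_cast Nat.choose_pos (by omega : c ≤ 2*c)
  have hCZ : (countZero n : ℝ) = N := by
    rw [countZero_eq ⟨c, hc⟩, hndiv, hn2c]
  -- α = countBoth / N²
  have halpha : alphaCorr n m = (countBoth n m : ℝ) / N^2 := by
    unfold alphaCorr
    rw [hCZ]
    rw [show (2:ℝ)^(2*n) = ((2:ℝ)^n)^2 by rw [two_mul, pow_add, sq]]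
    have h2n : ((2:ℝ)^n) ≠ 0 := by positivity
    field_simp
  -- cast of countBoth
  set B : ℕ → ℝ := fun k => (((2*c - m).choose (c - k) : ℕ) : ℝ) with hBdef
  have hCB : (countBoth n m : ℝ)
      = ∑ k ∈ Finset.range (m+1), (m.choose k : ℝ) * B k * (2^m * B k) := by
    rw [countBoth_eq ⟨c, hc⟩ (by omega : m ≤ n/2), hndiv, hnm]
    push_cast
    exact Finset.sum_congr rfl (fun k _ => by first | (rw [hBdef]; ring) | rw [hBdef] | rfl)
  -- Vandermonde
  have hV : ∑ k ∈ Finset.range (m+1), (m.choose k : ℝ) * B k = N := by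
    have hv := vandermonde_range (n := n) (c := c) (m := m) hmc
    rw [hnm] at hv
    rw [show m + (2*c - m) = 2*c by omega] at hv
    rw [hNdef]
    simp only [hBdef]
    exact_mod_cast hv
  -- sum of binomials
  have hW : ∑ k ∈ Finset.range (m+1), (m.choose k : ℝ) = 2^m := by
    exact_mod_cast Nat.sum_range_choose m
  have h2m : ((2:ℝ)^m) ≠ 0 := by positivity
  -- variance identity
  have hkey : alphaCorr n m - 1
      = ∑ k ∈ Finset.range (m+1), ((m.choose k : ℝ)/2^m) * (2^m * B k / N - 1)^2 := by
    have hpt : ∀ k ∈ Finset.range (m+1),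
        ((m.choose k : ℝ)/2^m) * (2^m * B k / N - 1)^2
        = ((m.choose k : ℝ) * B k * (2^m * B k))/N^2
          - 2*((m.choose k : ℝ) * B k)/N + (m.choose k : ℝ)/2^m := by
      intro k _
      field_simp
      ring
    rw [Finset.sum_congr rfl hpt]
    rw [Finset.sum_add_distrib, Finset.sum_sub_distrib]
    rw [← Finset.sum_div, ← Finset.sum_div, ← Finset.sum_div]
    rw [show ∑ k ∈ Finset.range (m+1), 2*((m.choose k : ℝ) * B k)
        = 2 * ∑ k ∈ Finset.range (m+1), ((m.choose k : ℝ) * B k) from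
      (Finset.mul_sum _ _ _).symm]
    rw [hV, hW, ← hCB, halpha]
    field_simp
    ring
  -- nonnegativity
  have hwnn : ∀ k ∈ Finset.range (m+1), (0:ℝ) ≤ (m.choose k : ℝ)/2^m := by
    intro k _; positivity
  have hpos : 0 ≤ alphaCorr n m - 1 := by
    rw [hkey]
    apply Finset.sum_nonneg
    intro k hk
    exact mul_nonneg (hwnn k hk) (sq_nonneg _)
  -- pointwise bound
  have hcpos : (0:ℝ) < c := by exact_mod_cast hc1
  have hstep1 : ∑ k ∈ Finset.range (m+1), ((m.choose k : ℝ)/2^m) * (2^m * B k / N - 1)^2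
      ≤ ∑ k ∈ Finset.range (m+1), ((m.choose k : ℝ)/2^m)
          * (21 * ((m:ℝ) + ((m:ℝ) - 2*k)^2) / c)^2 := by
    apply Finset.sum_le_sum
    intro k hk
    apply mul_le_mul_of_nonneg_left _ (hwnn k hk)
    have hb := t_bound c m k hc1 hmc hm2 (by simpa using Nat.lt_succ_iff.1 (Finset.mem_range.1 hk))
    rw [← hNdef] at hb
    calc (2^m * B k / N - 1)^2 = |2^m * B k / N - 1|^2 := (sq_abs _).symm
      _ ≤ (21 * ((m:ℝ) + ((m:ℝ) - 2*k)^2) / c)^2 :=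
          pow_le_pow_left₀ (abs_nonneg _) hb 2
  -- rewrite the bound sum
  have hstep2 : ∑ k ∈ Finset.range (m+1), ((m.choose k : ℝ)/2^m)
          * (21 * ((m:ℝ) + ((m:ℝ) - 2*k)^2) / c)^2
      = (441/((2:ℝ)^m * (c:ℝ)^2)) * ∑ k ∈ Finset.range (m+1),
          (m.choose k : ℝ) * ((m:ℝ) + ((m:ℝ) - 2*k)^2)^2 := by
    rw [Finset.mul_sum]
    apply Finset.sum_congr rfl
    intro k _
    field_simp
    ring
  -- moment bounds
  have hM2 : ∑ k ∈ Finset.range (m+1), (m.choose k : ℝ) * ((m:ℝ) - 2*k)^2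
      = (m:ℝ) * 2^m := by
    have h := congrArg (Int.cast : ℤ → ℝ) (moment2 m)
    push_cast at h
    rw [← h]
    exact Finset.sum_congr rfl (fun k _ => by ring)
  have hM4 : ∑ k ∈ Finset.range (m+1), (m.choose k : ℝ) * ((m:ℝ) - 2*k)^4
      ≤ 3 * (m:ℝ)^2 * 2^m := by
    have h := (Int.cast_le (R := ℝ)).2 (moment4 m)
    push_cast at h
    calc ∑ k ∈ Finset.range (m+1), (m.choose k : ℝ) * ((m:ℝ) - 2*k)^4
        = ∑ k ∈ Finset.range (m+1), (m.choose k : ℝ) * (2*(k:ℝ) - m)^4 :=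
          Finset.sum_congr rfl (fun k _ => by ring)
      _ ≤ 3 * (m:ℝ)^2 * 2^m := h
  have hX : ∑ k ∈ Finset.range (m+1), (m.choose k : ℝ) * ((m:ℝ) + ((m:ℝ) - 2*k)^2)^2
      ≤ 6 * (m:ℝ)^2 * 2^m := by
    have hexp : ∀ k ∈ Finset.range (m+1),
        (m.choose k : ℝ) * ((m:ℝ) + ((m:ℝ) - 2*k)^2)^2
        = (m:ℝ)^2 * (m.choose k : ℝ)
          + 2*(m:ℝ) * ((m.choose k : ℝ) * ((m:ℝ) - 2*k)^2)
          + (m.choose k : ℝ) * ((m:ℝ) - 2*k)^4 := by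
      intro k _; ring
    rw [Finset.sum_congr rfl hexp, Finset.sum_add_distrib, Finset.sum_add_distrib,
      ← Finset.mul_sum, ← Finset.mul_sum, hW, hM2]
    have hmnn : (0:ℝ) ≤ m := Nat.cast_nonneg m
    nlinarith [hM4]
  -- final computation
  have hnc : (n:ℝ) = 2*c := by rw [hn2c]; push_cast; ring
  rw [abs_of_nonneg hpos, hkey]
  calc ∑ k ∈ Finset.range (m+1), ((m.choose k : ℝ)/2^m) * (2^m * B k / N - 1)^2
      ≤ (441/((2:ℝ)^m * (c:ℝ)^2)) * ∑ k ∈ Finset.range (m+1),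
          (m.choose k : ℝ) * ((m:ℝ) + ((m:ℝ) - 2*k)^2)^2 := by
        rw [← hstep2]; exact hstep1
    _ ≤ (441/((2:ℝ)^m * (c:ℝ)^2)) * (6 * (m:ℝ)^2 * 2^m) := by
        apply mul_le_mul_of_nonneg_left hX
        positivity
    _ = 10584 * (m:ℝ)^2 / (n:ℝ)^2 := by
        rw [hnc]
        field_simp
        ring
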